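/- Let α ∈ (0,1), let k ≥ 1 be an integer with k^α ≥ 3, and let n ≥ 0 and p_1,…,p_n ∈ [0, ⌊k^α⌋/k). Then there exist q_1,…,q_n, each an integer multiple of 1/k with q_i ∈ [0, ⌊k^α⌋/k] and |q_i − p_i| ≤ 1/k, such that |Σ_{i=1}^n q_i − Σ_{i=1}^n p_i| ≤ 1/k and ||PB(p_1,…,p_n) − PB(q_1,…,q_n)|| ≤ 3/k^{1−α}. -/

import Mathlib

open Finset

/-- The Poisson binomial distribution: the law of the sum of independent Bernoulli
random variables indexed by `A` with expectations `p i`. -/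
noncomputable def PB {ι : Type*} [DecidableEq ι] (A : Finset ι) (p : ι → ℝ) (m : ℕ) : ℝ :=
  ∑ T ∈ A.powerset.filter (fun T => T.card = m), (∏ i ∈ T, p i) * ∏ i ∈ A \ T, (1 - p i)

/-- Total variation distance between two distributions on `ℕ`. -/
noncomputable def tvDist (P Q : ℕ → ℝ) : ℝ := (1 / 2) * ∑' m : ℕ, |P m - Q m|

open scoped Nat

open Finset
open scoped Nat

noncomputable def poi (l : ℝ) (m : ℕ) : ℝ := Real.exp (-l) * l ^ m / m.factorial

lemma poi_nonneg {l : ℝ} (hl : 0 ≤ l) (m : ℕ) : 0 ≤ poi l m := by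
  unfold poi
  positivity

lemma summable_poi (l : ℝ) : Summable (poi l) := by
  have := (Real.summable_pow_div_factorial l).mul_left (Real.exp (-l))
  refine this.congr fun m => ?_
  unfold poi; ring

lemma tsum_poi {l : ℝ} : ∑' m, poi l m = 1 := by
  have h : ∑' m, poi l m = Real.exp (-l) * ∑' m, l ^ m / m.factorial := by
    rw [← tsum_mul_left]
    refine tsum_congr fun m => ?_
    unfold poi; ring
  have he : ∑' m : ℕ, l ^ m / (m.factorial : ℝ) = Real.exp l := by
    rw [Real.exp_eq_exp_ℝ, NormedSpace.exp_eq_tsum_div]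
  rw [h, he, ← Real.exp_add]
  simp

lemma poi_succ (l : ℝ) (m : ℕ) : (m + 1 : ℝ) * poi l (m+1) = l * poi l m := by
  unfold poi
  rw [Nat.factorial_succ]
  push_cast
  field_simp
  ring

lemma poi_pos {l : ℝ} (hl : 0 < l) (m : ℕ) : 0 < poi l m := by
  unfold poi
  positivity

noncomputable def pcdf (l : ℝ) (j : ℕ) : ℝ := ∑ i ∈ range (j+1), poi l i
noncomputable def ptail (l : ℝ) (j : ℕ) : ℝ := ∑' i, poi l (j+1+i)

lemma pcdf_add_ptail {l : ℝ} (j : ℕ) : pcdf l j + ptail l j = 1 := by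
  have := Summable.sum_add_tsum_nat_add (f := poi l) (j+1) (summable_poi l)
  rw [← tsum_poi (l := l), ← this]
  unfold pcdf ptail
  congr 1
  exact tsum_congr fun i => by rw [Nat.add_comm i (j+1)]

lemma summable_poi_add (l : ℝ) (j : ℕ) : Summable (fun i => poi l (j+1+i)) := by
  have := (summable_poi l).comp_injective (add_right_injective (j+1))
  exact this.congr fun i => by simp [Nat.add_comm]

lemma ptail_nonneg {l : ℝ} (hl : 0 ≤ l) (j : ℕ) : 0 ≤ ptail l j :=
  tsum_nonneg fun _ => poi_nonneg hl _

lemma pcdf_nonneg {l : ℝ} (hl : 0 ≤ l) (j : ℕ) : 0 ≤ pcdf l j :=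
  sum_nonneg fun i _ => poi_nonneg hl i

/-- single-point Stein solution pieces -/
noncomputable def gi (l : ℝ) (i : ℕ) : ℕ → ℝ
  | 0 => 0
  | (j+1) => poi l i * ((if i ≤ j then 1 else 0) - pcdf l j) / (l * poi l j)

/-- Stein solution for set S -/
noncomputable def steinG (l : ℝ) (S : Finset ℕ) : ℕ → ℝ
  | 0 => 0
  | (j+1) => (∑ i ∈ range (j+1), ((if i ∈ S then (1:ℝ) else 0) - ∑ s ∈ S, poi l s) * poi l i) / (l * poi l j)

lemma steinG_succ (l : ℝ) (S : Finset ℕ) (j : ℕ) :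
    steinG l S (j+1) = (∑ i ∈ range (j+1), ((if i ∈ S then (1:ℝ) else 0) - ∑ s ∈ S, poi l s) * poi l i) / (l * poi l j) := rfl

lemma gi_succ (l : ℝ) (i j : ℕ) :
    gi l i (j+1) = poi l i * ((if i ≤ j then 1 else 0) - pcdf l j) / (l * poi l j) := rfl

lemma steinG_eq_sum {l : ℝ} (S : Finset ℕ) (j : ℕ) :
    steinG l S j = ∑ i ∈ S, gi l i j := by
  cases j with
  | zero => simp [steinG, gi]
  | succ j =>
    rw [steinG_succ]
    rw [sum_congr rfl (fun i (_ : i ∈ S) => gi_succ l i j), ← sum_div]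
    congr 1
    have h2 : ∀ i ∈ S, poi l i * ((if i ≤ j then (1:ℝ) else 0) - pcdf l j)
        = (if i ≤ j then (1:ℝ) else 0) * poi l i - pcdf l j * poi l i := by
      intro i _; ring
    rw [sum_congr rfl h2, sum_sub_distrib, ← mul_sum]
    have h1 : ∑ i ∈ range (j+1), ((if i ∈ S then (1:ℝ) else 0) - ∑ s ∈ S, poi l s) * poi l i
        = ∑ i ∈ range (j+1), (if i ∈ S then (1:ℝ) else 0) * poi l i
          - pcdf l j * (∑ s ∈ S, poi l s) := by
      simp only [sub_mul]
      rw [sum_sub_distrib, ← mul_sum]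
      unfold pcdf; ring
    rw [h1]
    congr 1
    simp only [ite_mul, one_mul, zero_mul]
    rw [← sum_filter, ← sum_filter]
    apply sum_congr ?_ (fun _ _ => rfl)
    ext i
    simp [Nat.lt_succ_iff, and_comm]

lemma stein_eq {l : ℝ} (hl : 0 < l) (S : Finset ℕ) (j : ℕ) :
    l * steinG l S (j+1) - j * steinG l S j
      = (if j ∈ S then (1:ℝ) else 0) - ∑ s ∈ S, poi l s := by
  have hpj := poi_pos hl j
  cases j with
  | zero =>
    rw [steinG_succ]
    simp [steinG, sum_range_succ]
    have := (poi_pos hl 0).ne'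
    field_simp
  | succ j =>
    have hpjj := poi_pos hl j
    have hne : l * poi l (j+1) ≠ 0 := by positivity
    have hne2 : l * poi l j ≠ 0 := by positivity
    rw [steinG_succ, steinG_succ, sum_range_succ]
    have hrec : ((j:ℝ)+1) * poi l (j+1) = l * poi l j := poi_succ l j
    have h0 : l * poi l j = ((j:ℝ)+1) * poi l (j+1) := hrec.symm
    push_cast
    rw [h0]
    field_simp
    ring

-- Key ratio inequalities
lemma poi_cross {l : ℝ} (hl : 0 < l) {x t : ℕ} (hxt : x ≤ t) :
    poi l x * poi l (t+1) ≤ poi l (x+1) * poi l t := by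
  have h1 := poi_succ l x
  have h2 := poi_succ l t
  have hx := poi_pos hl x
  have ht := poi_pos hl t
  have hx1 := poi_pos hl (x+1)
  have ht1 := poi_pos hl (t+1)
  -- poi x = (x+1) poi(x+1)/l ; poi (t+1) = l poi t/(t+1)
  have e1 : poi l x = ((x:ℝ)+1) * poi l (x+1) / l := by
    field_simp at h1 ⊢; linarith [h1]
  have e2 : poi l (t+1) = l * poi l t / ((t:ℝ)+1) := by
    field_simp; linarith [h2]
  rw [e1, e2]
  have hxx : ((x:ℝ)+1) ≤ (t:ℝ)+1 := by
    have : (x:ℝ) ≤ t := by exact_mod_cast hxt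
    linarith
  have htpos : (0:ℝ) < (t:ℝ)+1 := by positivity
  rw [div_mul_div_comm]
  rw [div_le_iff₀ (by positivity)]
  have : ((x:ℝ)+1) * poi l (x+1) * (l * poi l t) ≤ ((t:ℝ)+1) * poi l (x+1) * (l * poi l t) := by
    apply mul_le_mul_of_nonneg_right _ (by positivity)
    apply mul_le_mul_of_nonneg_right hxx (le_of_lt hx1)
  calc ((x:ℝ)+1) * poi l (x+1) * (l * poi l t) ≤ ((t:ℝ)+1) * poi l (x+1) * (l * poi l t) := this
    _ = poi l (x+1) * poi l t * (l * ((t:ℝ)+1)) := by ring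

lemma K1 {l : ℝ} (hl : 0 < l) (t : ℕ) :
    pcdf l t * poi l (t+1) ≤ pcdf l (t+1) * poi l t := by
  unfold pcdf
  rw [sum_mul, sum_mul]
  calc ∑ x ∈ range (t+1), poi l x * poi l (t+1)
      ≤ ∑ x ∈ range (t+1), poi l (x+1) * poi l t := by
        apply sum_le_sum
        intro x hx
        exact poi_cross hl (Nat.lt_succ_iff.mp (mem_range.mp hx))
    _ ≤ ∑ x ∈ range (t+1+1), poi l x * poi l t := by
        rw [sum_range_succ' (fun x => poi l x * poi l t) (t+1)]
        nlinarith [poi_pos hl 0, poi_pos hl t]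

lemma K2 {l : ℝ} (hl : 0 < l) (t : ℕ) :
    ptail l (t+1) * poi l t ≤ ptail l t * poi l (t+1) := by
  unfold ptail
  rw [← tsum_mul_right, ← tsum_mul_right]
  apply Summable.tsum_le_tsum _ ((summable_poi_add l (t+1)).mul_right _) ((summable_poi_add l t).mul_right _)
  intro x
  have : t + 1 + 1 + x = (t + 1 + x) + 1 := by omega
  rw [this]
  have h := poi_cross hl (x := t) (t := t+1+x) (by omega)
  linear_combination h

lemma K3 {l : ℝ} (hl : 0 < l) (t : ℕ) :
    l * pcdf l t ≤ ((t:ℝ)+1) * pcdf l (t+1) := by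
  unfold pcdf
  rw [mul_sum, mul_sum]
  calc ∑ x ∈ range (t+1), l * poi l x
      = ∑ x ∈ range (t+1), ((x:ℝ)+1) * poi l (x+1) := by
        exact sum_congr rfl fun x _ => (poi_succ l x).symm
    _ ≤ ∑ x ∈ range (t+1), ((t:ℝ)+1) * poi l (x+1) := by
        apply sum_le_sum
        intro x hx
        have hx' : (x:ℝ) ≤ t := by exact_mod_cast Nat.lt_succ_iff.mp (mem_range.mp hx)
        have := poi_pos hl (x+1)
        nlinarith
    _ ≤ ∑ x ∈ range (t+1+1), ((t:ℝ)+1) * poi l x := by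
        rw [sum_range_succ' (fun x => ((t:ℝ)+1) * poi l x) (t+1)]
        nlinarith [poi_pos hl 0]

noncomputable def dfn (l : ℝ) (j : ℕ) (i : ℕ) : ℝ := gi l i (j+1) - gi l i j

lemma dfn_nonpos {l : ℝ} (hl : 0 < l) {t i : ℕ} (hij : i ≠ t+1) :
    dfn l (t+1) i ≤ 0 := by
  unfold dfn
  rw [gi_succ, gi_succ]
  have hpt := poi_pos hl t
  have hpt1 := poi_pos hl (t+1)
  have hpi := poi_nonneg hl.le i
  rcases le_or_gt i t with hle | hgt
  · -- i ≤ t : both indicators are 1 ; use tails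
    rw [if_pos (by omega : i ≤ t+1), if_pos hle]
    have e1 : (1:ℝ) - pcdf l (t+1) = ptail l (t+1) := by
      have := pcdf_add_ptail (l := l) (t+1); linarith
    have e2 : (1:ℝ) - pcdf l t = ptail l t := by
      have := pcdf_add_ptail (l := l) t; linarith
    rw [e1, e2]
    rw [sub_nonpos, div_le_div_iff₀ (by positivity) (by positivity)]
    have hK := K2 hl t
    calc poi l i * ptail l (t+1) * (l * poi l t)
        = (ptail l (t+1) * poi l t) * (l * poi l i) := by ring
      _ ≤ (ptail l t * poi l (t+1)) * (l * poi l i) := by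
          apply mul_le_mul_of_nonneg_right hK (by positivity)
      _ = poi l i * ptail l t * (l * poi l (t+1)) := by ring
  · -- i > t, i ≠ t+1 so i ≥ t+2 : both indicators are 0 ; use cdfs
    rw [if_neg (by omega), if_neg (by omega)]
    rw [sub_nonpos, div_le_div_iff₀ (by positivity) (by positivity)]
    have hK := K1 hl t
    calc poi l i * (0 - pcdf l (t+1)) * (l * poi l t)
        = (pcdf l t * poi l (t+1)) * (l * poi l i) - (pcdf l (t+1) * poi l t) * (l * poi l i)
          - (pcdf l t * poi l (t+1)) * (l * poi l i) := by ring
      _ ≤ - (pcdf l t * poi l (t+1)) * (l * poi l i) := by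
          have : (pcdf l t * poi l (t+1)) * (l * poi l i) ≤ (pcdf l (t+1) * poi l t) * (l * poi l i) := by
            apply mul_le_mul_of_nonneg_right hK (by positivity)
          linarith
      _ = poi l i * (0 - pcdf l t) * (l * poi l (t+1)) := by ring

lemma dfn_diag_eq {l : ℝ} (hl : 0 < l) (t : ℕ) :
    dfn l (t+1) (t+1) = ptail l (t+1) / l + pcdf l t / ((t:ℝ)+1) := by
  unfold dfn
  rw [gi_succ, gi_succ]
  rw [if_pos (le_refl (t+1)), if_neg (by omega)]
  have hpt := poi_pos hl t
  have hpt1 := poi_pos hl (t+1)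
  have e1 : (1:ℝ) - pcdf l (t+1) = ptail l (t+1) := by
    have := pcdf_add_ptail (l := l) (t+1); linarith
  have hrec : ((t:ℝ)+1) * poi l (t+1) = l * poi l t := by
    have := poi_succ l t; push_cast at this ⊢; linarith
  have h2 : poi l (t+1) / (l * poi l t) = 1 / ((t:ℝ)+1) := by
    rw [div_eq_div_iff (by positivity) (by positivity)]
    linarith [hrec]
  have h3 : poi l (t+1) * (1 - pcdf l (t+1)) / (l * poi l (t+1)) = ptail l (t+1) / l := by
    rw [e1, mul_comm l (poi l (t+1)), mul_div_mul_left _ _ (ne_of_gt hpt1)]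
  have h4 : poi l (t+1) * ((0:ℝ) - pcdf l t) / (l * poi l t) = -(pcdf l t / ((t:ℝ)+1)) := by
    rw [mul_comm (poi l (t+1)) _, mul_div_assoc, h2]
    ring
  rw [h3, h4]
  ring

lemma dfn_diag_nonneg {l : ℝ} (hl : 0 < l) (t : ℕ) : 0 ≤ dfn l (t+1) (t+1) := by
  rw [dfn_diag_eq hl]
  have h1 := ptail_nonneg hl.le (t+1)
  have h2 := pcdf_nonneg hl.le t
  positivity

lemma dfn_diag_le_inv_l {l : ℝ} (hl : 0 < l) (t : ℕ) : dfn l (t+1) (t+1) ≤ 1 / l := by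
  rw [dfn_diag_eq hl]
  have hK := K3 hl t
  have htot := pcdf_add_ptail (l := l) (t+1)
  have h2 := pcdf_nonneg hl.le (t+1)
  have h3 := ptail_nonneg hl.le (t+1)
  have step : pcdf l t / ((t:ℝ)+1) ≤ pcdf l (t+1) / l := by
    rw [div_le_div_iff₀ (by positivity) hl]
    linarith [hK]
  calc ptail l (t+1) / l + pcdf l t / ((t:ℝ)+1)
      ≤ ptail l (t+1) / l + pcdf l (t+1) / l := by linarith
    _ = (pcdf l (t+1) + ptail l (t+1)) / l := by rw [← add_div]; ring_nf
    _ = 1 / l := by rw [htot]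

lemma dfn_diag_le_inv_t {l : ℝ} (hl : 0 < l) (t : ℕ) : dfn l (t+1) (t+1) ≤ 1 / ((t:ℝ)+1) := by
  rw [dfn_diag_eq hl]
  have htot : pcdf l t + ptail l t = 1 := pcdf_add_ptail t
  -- ptail (t+1) / l ≤ ptail t / (t+1)
  have key : ptail l (t+1) * ((t:ℝ)+1) ≤ ptail l t * l := by
    unfold ptail
    rw [← tsum_mul_right, ← tsum_mul_right]
    apply Summable.tsum_le_tsum _ ((summable_poi_add l (t+1)).mul_right _) ((summable_poi_add l t).mul_right _)
    intro x
    have e : t + 1 + 1 + x = (t + 1 + x) + 1 := by omega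
    rw [e]
    have hr := poi_succ l (t+1+x)
    push_cast at hr
    have hp := poi_pos hl (t+1+x+1)
    have hxx : (0:ℝ) ≤ (x:ℝ) := Nat.cast_nonneg x
    have : ((t:ℝ)+1) ≤ ((t:ℝ)+1+x+1) := by linarith
    nlinarith [poi_pos hl (t+1+x)]
  have step : ptail l (t+1) / l ≤ ptail l t / ((t:ℝ)+1) := by
    rw [div_le_div_iff₀ hl (by positivity)]
    linarith [key]
  calc ptail l (t+1) / l + pcdf l t / ((t:ℝ)+1)
      ≤ ptail l t / ((t:ℝ)+1) + pcdf l t / ((t:ℝ)+1) := by linarith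
    _ = (pcdf l t + ptail l t) / ((t:ℝ)+1) := by rw [← add_div]; ring_nf
    _ = 1 / ((t:ℝ)+1) := by rw [htot]

lemma gi_succ' (l : ℝ) (i j : ℕ) :
    gi l i (j+1) = ((if i ≤ j then poi l i else 0) - poi l i * pcdf l j) / (l * poi l j) := by
  rw [gi_succ]
  split_ifs <;> ring_nf

lemma summable_gi (l : ℝ) (j : ℕ) : Summable (fun i => gi l i (j+1)) := by
  have h1 : Summable (fun i => if i ≤ j then poi l i else 0) := by
    apply summable_of_ne_finset_zero (s := range (j+1))
    intro i hi
    rw [if_neg]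
    simpa [Nat.lt_succ_iff] using hi
  have h2 : Summable (fun i => poi l i * pcdf l j) := (summable_poi l).mul_right _
  exact ((h1.sub h2).div_const _).congr fun i => (gi_succ' l i j).symm

lemma tsum_gi {l : ℝ} (j : ℕ) : ∑' i, gi l i (j+1) = 0 := by
  have h1 : Summable (fun i => if i ≤ j then poi l i else 0) := by
    apply summable_of_ne_finset_zero (s := range (j+1))
    intro i hi
    rw [if_neg]
    simpa [Nat.lt_succ_iff] using hi
  have h2 : Summable (fun i => poi l i * pcdf l j) := (summable_poi l).mul_right _
  have e : ∀ i : ℕ, gi l i (j+1) = ((if i ≤ j then poi l i else 0) - poi l i * pcdf l j) / (l * poi l j) :=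
    fun i => gi_succ' l i j
  rw [tsum_congr e, tsum_div_const, Summable.tsum_sub h1 h2]
  have e1 : ∑' i, (if i ≤ j then poi l i else 0) = pcdf l j := by
    rw [tsum_eq_sum (s := range (j+1)) (fun i hi => by rw [if_neg]; simpa [Nat.lt_succ_iff] using hi)]
    exact sum_congr rfl fun i hi => if_pos (Nat.lt_succ_iff.mp (mem_range.mp hi))
  have e2 : ∑' i, poi l i * pcdf l j = pcdf l j := by
    rw [tsum_mul_right, tsum_poi, one_mul]
  rw [e1, e2, sub_self, zero_div]

lemma summable_dfn (l : ℝ) (t : ℕ) : Summable (dfn l (t+1)) :=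
  (summable_gi l (t+1)).sub (summable_gi l t)

lemma tsum_dfn {l : ℝ} (t : ℕ) : ∑' i, dfn l (t+1) i = 0 := by
  unfold dfn
  rw [Summable.tsum_sub (summable_gi l (t+1)) (summable_gi l t), tsum_gi, tsum_gi, sub_self]

lemma steinG_delta_bound {l : ℝ} (hl : 0 < l) (S : Finset ℕ) (t : ℕ) :
    |steinG l S (t+2) - steinG l S (t+1)| ≤ min 1 (1/l) := by
  have hdd0 := dfn_diag_nonneg hl t
  set D := dfn l (t+1) with hD
  set dd := D (t+1) with hdd
  have hsum : steinG l S (t+2) - steinG l S (t+1) = ∑ i ∈ S, D i := by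
    rw [steinG_eq_sum, steinG_eq_sum, ← sum_sub_distrib]
    exact sum_congr rfl fun i _ => rfl
  have hupper : ∑ i ∈ S, D i ≤ dd := by
    calc ∑ i ∈ S, D i ≤ ∑ i ∈ S, (if i = t+1 then dd else 0) := by
          apply sum_le_sum
          intro i _
          by_cases h : i = t+1
          · rw [if_pos h, h]
          · rw [if_neg h]
            exact dfn_nonpos hl h
      _ = if t+1 ∈ S then dd else 0 := sum_ite_eq' S (t+1) (fun _ => dd)
      _ ≤ dd := by split_ifs <;> simp [hdd0]
  have hlower : -dd ≤ ∑ i ∈ S, D i := by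
    have hsplit1 : Summable (fun i => if i ∈ S then D i else 0) := by
      apply summable_of_ne_finset_zero (s := S)
      intro i hi
      rw [if_neg hi]
    have hsplit2 : Summable (fun i => if i ∈ S then 0 else D i) := by
      have : (fun i => if i ∈ S then (0:ℝ) else D i) = fun i => D i - (if i ∈ S then D i else 0) := by
        funext i; split_ifs <;> ring
      rw [this]
      exact (summable_dfn l t).sub hsplit1
    have hsplit : (0:ℝ) = ∑ i ∈ S, D i + ∑' i, (if i ∈ S then 0 else D i) := by
      have : ∀ i : ℕ, dfn l (t+1) i = (if i ∈ S then D i else 0) + (if i ∈ S then 0 else D i) := by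
        intro i; split_ifs <;> simp [hD]
      have e3 : ∑' i, (if i ∈ S then D i else 0) = ∑ i ∈ S, D i := by
        rw [tsum_eq_sum (s := S) (fun i hi => by rw [if_neg hi])]
        exact sum_congr rfl fun i hi => if_pos hi
      have h0 : (0:ℝ) = ∑' i, D i := (tsum_dfn t).symm
      conv_lhs => rw [h0, tsum_congr this]
      rw [Summable.tsum_add hsplit1 hsplit2, e3]
    have htail : ∑' i, (if i ∈ S then 0 else D i) ≤ dd := by
      have hone : Summable (fun i => if i = t+1 then dd else (0:ℝ)) := by
        apply summable_of_ne_finset_zero (s := {t+1})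
        intro i hi
        rw [if_neg (by simpa using hi)]
      calc ∑' i, (if i ∈ S then 0 else D i)
          ≤ ∑' i, (if i = t+1 then dd else 0) := by
            apply Summable.tsum_le_tsum _ hsplit2 hone
            intro i
            by_cases h : i = t+1
            · subst h
              rw [if_pos rfl]
              by_cases h2 : t+1 ∈ S
              · rw [if_pos h2]; exact hdd0
              · rw [if_neg h2]
            · rw [if_neg h]
              by_cases h2 : i ∈ S
              · rw [if_pos h2]
              · rw [if_neg h2]; exact dfn_nonpos hl h
        _ = dd := by
            rw [tsum_eq_sum (s := {t+1}) (fun i hi => by rw [if_neg (by simpa using hi)])]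
            simp
    linarith
  rw [hsum, abs_le]
  constructor
  · have h1 : dd ≤ 1 := by
      have := dfn_diag_le_inv_t hl t
      have h2 : 1/((t:ℝ)+1) ≤ 1 := by
        rw [div_le_one (by positivity)]
        have : (0:ℝ) ≤ t := Nat.cast_nonneg t
        linarith
      exact le_trans this h2
    have h2 : dd ≤ 1/l := dfn_diag_le_inv_l hl t
    have : dd ≤ min 1 (1/l) := le_min h1 h2
    linarith
  · exact le_trans hupper (le_min (by
      have := dfn_diag_le_inv_t hl t
      have h2 : 1/((t:ℝ)+1) ≤ 1 := by
        rw [div_le_one (by positivity)]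
        have : (0:ℝ) ≤ t := Nat.cast_nonneg t
        linarith
      linarith) (dfn_diag_le_inv_l hl t))

variable {ι : Type*} [DecidableEq ι] {A : Finset ι} {p : ι → ℝ} {a : ι}

lemma PB_nonneg (h : ∀ i ∈ A, 0 ≤ p i ∧ p i ≤ 1) (m : ℕ) : 0 ≤ PB A p m := by
  apply sum_nonneg
  intro T hT
  rw [mem_filter, mem_powerset] at hT
  apply mul_nonneg
  · exact prod_nonneg fun i hi => (h i (hT.1 hi)).1
  · exact prod_nonneg fun i hi => by linarith [(h i (mem_sdiff.mp hi).1).2]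

lemma PB_eq_zero (h : A.card < m) : PB A p m = 0 := by
  apply sum_eq_zero
  intro T hT
  rw [mem_filter, mem_powerset] at hT
  exact absurd (hT.2 ▸ card_le_card hT.1) (by omega)

lemma PB_sum_one : ∑ m ∈ range (A.card + 1), PB A p m = 1 := by
  unfold PB
  rw [sum_fiberwise_of_maps_to (fun T hT => mem_range.mpr
    (Nat.lt_succ_of_le (card_le_card (mem_powerset.mp hT))))]
  rw [← prod_add]
  simp

lemma PB_zero : PB A p 0 = ∏ i ∈ A, (1 - p i) := by
  unfold PB
  have : A.powerset.filter (fun T => T.card = 0) = {∅} := by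
    ext T
    simp only [mem_filter, mem_powerset, card_eq_zero, mem_singleton]
    exact ⟨fun h => h.2, fun h => ⟨h ▸ empty_subset A, h⟩⟩
  rw [this, sum_singleton]
  simp

lemma PB_insert_zero (ha : a ∉ A) : PB (insert a A) p 0 = (1 - p a) * PB A p 0 := by
  rw [PB_zero, PB_zero, prod_insert ha]

lemma PB_insert_succ (ha : a ∉ A) (m : ℕ) :
    PB (insert a A) p (m+1) = (1 - p a) * PB A p (m+1) + p a * PB A p m := by
  unfold PB
  rw [powerset_insert, filter_union, sum_union]
  · congr 1
    · -- subsets not containing a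
      rw [mul_sum]
      apply sum_congr rfl
      intro T hT
      rw [mem_filter, mem_powerset] at hT
      have haT : a ∉ T := fun h => ha (hT.1 h)
      have : insert a A \ T = insert a (A \ T) := by
        ext x
        simp only [mem_sdiff, mem_insert]
        constructor
        · rintro ⟨hx | hx, hxt⟩
          · exact Or.inl hx
          · exact Or.inr ⟨hx, hxt⟩
        · rintro (rfl | ⟨hx, hxt⟩)
          · exact ⟨Or.inl rfl, haT⟩
          · exact ⟨Or.inr hx, hxt⟩
      rw [this, prod_insert (fun h => ha (mem_sdiff.mp h).1)]
      ring
    · -- subsets containing a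
      have himg : ((A.powerset.image (insert a)).filter (fun T => T.card = m+1))
          = (A.powerset.filter (fun T => T.card = m)).image (insert a) := by
        ext T
        simp only [mem_filter, mem_image, mem_powerset]
        constructor
        · rintro ⟨⟨T', hT', rfl⟩, hc⟩
          have haT' : a ∉ T' := fun h => ha (hT' h)
          rw [card_insert_of_notMem haT'] at hc
          exact ⟨T', ⟨hT', by omega⟩, rfl⟩
        · rintro ⟨T', ⟨hT', hc⟩, rfl⟩
          have haT' : a ∉ T' := fun h => ha (hT' h)
          exact ⟨⟨T', hT', rfl⟩, by rw [card_insert_of_notMem haT', hc]⟩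
      rw [himg, sum_image]
      · rw [mul_sum]
        apply sum_congr rfl
        intro T hT
        rw [mem_filter, mem_powerset] at hT
        have haT : a ∉ T := fun h => ha (hT.1 h)
        have h1 : insert a A \ insert a T = A \ T := by
          ext x
          simp only [mem_sdiff, mem_insert, not_or]
          constructor
          · rintro ⟨hx | hx, hxa, hxt⟩
            · exact absurd hx hxa
            · exact ⟨hx, hxt⟩
          · rintro ⟨hx, hxt⟩
            exact ⟨Or.inr hx, fun h => ha (h ▸ hx), hxt⟩
        rw [h1, prod_insert haT]
        ring
      · intro x hx y hy hxy
        rw [mem_coe, mem_filter, mem_powerset] at hx hy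
        have : (insert a x).erase a = (insert a y).erase a := by rw [hxy]
        rwa [erase_insert (fun h => ha (hx.1 h)), erase_insert (fun h => ha (hy.1 h))] at this
  · rw [disjoint_left]
    intro T hT hT2
    rw [mem_filter, mem_powerset] at hT
    rw [mem_filter, mem_image] at hT2
    obtain ⟨⟨T', _, rfl⟩, _⟩ := hT2
    exact ha (hT.1 (mem_insert_self a T'))

lemma PB_mul : ∀ (A : Finset ι) (m : ℕ),
    ((m:ℝ)+1) * PB A p (m+1) = ∑ i ∈ A, p i * PB (A.erase i) p m := by
  intro A
  induction A using Finset.induction_on with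
  | empty => intro m; simp [PB_eq_zero (by simp : (∅ : Finset ι).card < m+1)]
  | insert a A ha ih =>
    intro m
    rw [sum_insert ha, erase_insert ha]
    have hsum : ∑ i ∈ A, p i * PB ((insert a A).erase i) p m
        = ∑ i ∈ A, p i * PB (insert a (A.erase i)) p m := by
      apply sum_congr rfl
      intro i hi
      rw [erase_insert_of_ne (fun h => ha (by rw [h]; exact hi))]
    rw [hsum]
    cases m with
    | zero =>
      have e : ∑ i ∈ A, p i * PB (insert a (A.erase i)) p 0
          = (1 - p a) * ∑ i ∈ A, p i * PB (A.erase i) p 0 := by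
        rw [mul_sum]
        apply sum_congr rfl
        intro i hi
        rw [PB_insert_zero (fun h => ha (mem_erase.mp h).2)]
        ring
      rw [e, PB_insert_succ ha, ← ih 0]
      push_cast
      ring
    | succ m =>
      have e : ∑ i ∈ A, p i * PB (insert a (A.erase i)) p (m+1)
          = (1 - p a) * ∑ i ∈ A, p i * PB (A.erase i) p (m+1)
            + p a * ∑ i ∈ A, p i * PB (A.erase i) p m := by
        rw [mul_sum, mul_sum, ← sum_add_distrib]
        apply sum_congr rfl
        intro i hi
        rw [PB_insert_succ (fun h => ha (mem_erase.mp h).2)]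
        ring
      rw [e, ← ih m, ← ih (m+1), PB_insert_succ ha]
      push_cast
      ring


lemma PB_erase_zero {A : Finset ι} {p : ι → ℝ} {i : ι} (hi : i ∈ A) :
    PB A p 0 = (1 - p i) * PB (A.erase i) p 0 := by
  conv_lhs => rw [← insert_erase hi]
  exact PB_insert_zero (notMem_erase i A)

lemma PB_erase_succ {A : Finset ι} {p : ι → ℝ} {i : ι} (hi : i ∈ A) (m : ℕ) :
    PB A p (m+1) = (1 - p i) * PB (A.erase i) p (m+1) + p i * PB (A.erase i) p m := by
  conv_lhs => rw [← insert_erase hi]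
  exact PB_insert_succ (notMem_erase i A) m

lemma summable_PB {A : Finset ι} {p : ι → ℝ} : Summable (PB A p) := by
  apply summable_of_ne_finset_zero (s := range (A.card + 1))
  intro m hm
  exact PB_eq_zero (by simpa [Nat.lt_succ_iff] using hm)

lemma PB_sum_one' {A : Finset ι} {p : ι → ℝ} {M : ℕ} (hM : A.card ≤ M) :
    ∑ m ∈ range (M + 1), PB A p m = 1 := by
  rw [← PB_sum_one (A := A) (p := p)]
  symm
  apply sum_subset (by intro x hx; rw [mem_range] at *; omega)
  intro x _ hx
  exact PB_eq_zero (by rw [mem_range] at hx; omega)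

lemma PB_eq_poi_zero {A : Finset ι} {p : ι → ℝ} (h0 : ∀ i ∈ A, p i = 0) (m : ℕ) :
    PB A p m = poi 0 m := by
  cases m with
  | zero =>
    rw [PB_zero]
    have : ∀ i ∈ A, (1:ℝ) - p i = 1 := fun i hi => by rw [h0 i hi]; ring
    rw [prod_congr rfl this, prod_const_one]
    simp [poi]
  | succ m =>
    have h := PB_mul (p := p) A m
    have hz : ∑ i ∈ A, p i * PB (A.erase i) p m = 0 := by
      apply sum_eq_zero
      intro i hi
      rw [h0 i hi, zero_mul]
    rw [hz] at h
    have hm : (0:ℝ) < (m:ℝ) + 1 := by positivity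
    have : PB A p (m+1) = 0 := by
      rcases mul_eq_zero.mp h with h' | h'
      · exact absurd h' (by positivity)
      · exact h'
    rw [this]
    simp [poi]

theorem tv_PB_poi (A : Finset ι) (p : ι → ℝ) (c : ℝ)
    (hc0 : 0 ≤ c) (hc : c ≤ 1) (h : ∀ i ∈ A, 0 ≤ p i ∧ p i ≤ c) :
    tvDist (PB A p) (poi (∑ i ∈ A, p i)) ≤ c := by
  set l := ∑ i ∈ A, p i with hl
  have h01 : ∀ i ∈ A, 0 ≤ p i ∧ p i ≤ 1 := fun i hi => ⟨(h i hi).1, le_trans (h i hi).2 hc⟩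
  have hl0 : 0 ≤ l := sum_nonneg fun i hi => (h i hi).1
  rcases eq_or_lt_of_le hl0 with hl0' | hlpos
  · -- l = 0
    have hz : ∀ i ∈ A, p i = 0 :=
      (sum_eq_zero_iff_of_nonneg (fun i hi => (h i hi).1)).mp hl0'.symm
    have : ∀ m, PB A p m - poi l m = 0 := fun m => by
      rw [← hl0', PB_eq_poi_zero hz m, sub_self]
    unfold tvDist
    rw [tsum_congr (fun m => by rw [this m, abs_zero])]
    simpa using hc0
  · -- l > 0
    set N := A.card with hN
    have hNpos : 0 < N := by
      rcases Finset.eq_empty_or_nonempty A with rfl | hA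
      · simp [hl] at hlpos
      · exact card_pos.mpr hA
    set S : Finset ℕ := (range (N+1)).filter (fun m => poi l m < PB A p m) with hS
    set f : ℕ → ℝ := fun m => PB A p m - poi l m with hf
    have hsumf : Summable f := summable_PB.sub (summable_poi l)
    have hsumabs : Summable (fun m => |f m|) := hsumf.abs
    -- tail of f
    have htail : ∀ m, f (m + (N+1)) = -(poi l (m + (N+1))) := fun m => by
      rw [hf]
      simp only
      rw [PB_eq_zero (by omega : A.card < m + (N+1))]
      ring
    have htsum_split : ∑' m, |f m| = ∑ m ∈ range (N+1), |f m| + ptail l N := by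
      rw [← Summable.sum_add_tsum_nat_add (N+1) hsumabs]
      congr 1
      unfold ptail
      apply tsum_congr
      intro m
      rw [htail m, abs_neg, abs_of_nonneg (poi_nonneg hl0 _), Nat.add_comm]
    -- positive part
    have habs : ∀ m, |f m| = 2 * max (f m) 0 - f m := fun m => by
      rcases le_or_gt 0 (f m) with h' | h'
      · rw [abs_of_nonneg h', max_eq_left h']; ring
      · rw [abs_of_neg h', max_eq_right h'.le]; ring
    have hsum_abs_range : ∑ m ∈ range (N+1), |f m|
        = 2 * ∑ m ∈ S, f m - ∑ m ∈ range (N+1), f m := by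
      rw [sum_congr rfl (fun m _ => habs m), sum_sub_distrib, ← mul_sum]
      congr 2
      rw [hS, sum_filter]
      apply sum_congr rfl
      intro m _
      rcases le_or_gt (PB A p m) (poi l m) with h' | h'
      · rw [if_neg (not_lt.mpr h'), max_eq_right (by rw [hf]; simp; linarith)]
      · rw [if_pos h', max_eq_left (by rw [hf]; simp; linarith)]
    have hsum_f_range : ∑ m ∈ range (N+1), f m = ptail l N := by
      rw [hf]
      simp only
      rw [sum_sub_distrib, PB_sum_one]
      have : ∑ m ∈ range (N+1), poi l m = pcdf l N := rfl
      rw [this]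
      have := pcdf_add_ptail (l := l) N
      linarith
    have htv : tvDist (PB A p) (poi l) = ∑ m ∈ S, f m := by
      unfold tvDist
      rw [htsum_split, hsum_abs_range, hsum_f_range]
      ring
    rw [htv]
    -- Stein estimate
    set G := steinG l S with hG
    set pS := ∑ s ∈ S, poi l s with hpS
    have hSsub : S ⊆ range (N+1) := filter_subset _ _
    have step2 : ∑ m ∈ S, f m = ∑ m ∈ range (N+1), PB A p m * ((if m ∈ S then (1:ℝ) else 0) - pS) := by
      symm
      have e1 : ∀ m ∈ range (N+1), PB A p m * ((if m ∈ S then (1:ℝ) else 0) - pS)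
          = (if m ∈ S then PB A p m else 0) - PB A p m * pS := fun m _ => by split_ifs <;> ring
      rw [sum_congr rfl e1, sum_sub_distrib, ← sum_mul,
        PB_sum_one' (hN.ge), one_mul, ← sum_filter]
      have e2 : Finset.filter (fun m => m ∈ S) (range (N+1)) = S := by
        rw [filter_mem_eq_inter, inter_eq_right.mpr hSsub]
      rw [e2, hpS, ← sum_sub_distrib]
    rw [step2]
    have hstein : ∀ m, (if m ∈ S then (1:ℝ) else 0) - pS = l * G (m+1) - m * G m :=
      fun m => (stein_eq hlpos S m).symm
    rw [sum_congr rfl (fun m _ => by rw [hstein m])]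
    -- the leave-one-out expansion
    have key : ∑ m ∈ range (N+1), PB A p m * (l * G (m+1) - (m:ℝ) * G m)
        = ∑ i ∈ A, (p i)^2 *
            (∑ m ∈ range (N+1), PB (A.erase i) p m * (G (m+2) - G (m+1))) := by
      have hPB'N : ∀ i ∈ A, PB (A.erase i) p N = 0 := by
        intro i hi
        apply PB_eq_zero
        rw [card_erase_of_mem hi]
        omega
      have hX : ∀ i ∈ A, ∑ m ∈ range (N+1), PB A p m * G (m+1)
          = (1 - p i) * (∑ m ∈ range (N+1), PB (A.erase i) p m * G (m+1))
            + p i * (∑ m ∈ range (N+1), PB (A.erase i) p m * G (m+2)) := by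
        intro i hi
        rw [sum_range_succ' (fun m => PB A p m * G (m+1)) N]
        have e1 : ∀ m ∈ range N, PB A p (m+1) * G (m+1+1)
            = (1 - p i) * (PB (A.erase i) p (m+1) * G (m+1+1))
              + p i * (PB (A.erase i) p m * G (m+2)) := by
          intro m _
          rw [PB_erase_succ hi m]
          ring
        rw [sum_congr rfl e1, sum_add_distrib, ← mul_sum, ← mul_sum, PB_erase_zero hi]
        rw [sum_range_succ' (fun m => PB (A.erase i) p m * G (m+1)) N]
        rw [sum_range_succ (fun m => PB (A.erase i) p m * G (m+2)) N]
        rw [hPB'N i hi]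
        ring
      have hT2 : ∑ m ∈ range (N+1), PB A p m * ((m:ℝ) * G m)
          = ∑ i ∈ A, p i * (∑ m ∈ range (N+1), PB (A.erase i) p m * G (m+1)) := by
        rw [sum_range_succ' (fun m => PB A p m * ((m:ℝ) * G m)) N]
        have e1 : ∀ m ∈ range N, PB A p (m+1) * (((m+1:ℕ):ℝ) * G (m+1))
            = ∑ i ∈ A, p i * (PB (A.erase i) p m * G (m+1)) := by
          intro m _
          have hmul := PB_mul (p := p) A m
          calc PB A p (m+1) * (((m+1:ℕ):ℝ) * G (m+1))
              = (((m:ℝ)+1) * PB A p (m+1)) * G (m+1) := by push_cast; ring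
            _ = (∑ i ∈ A, p i * PB (A.erase i) p m) * G (m+1) := by rw [hmul]
            _ = ∑ i ∈ A, p i * (PB (A.erase i) p m * G (m+1)) := by
                rw [sum_mul]
                exact sum_congr rfl fun i _ => by ring
        rw [sum_congr rfl e1, sum_comm]
        have e2 : PB A p 0 * (((0:ℕ):ℝ) * G 0) = 0 := by push_cast; ring
        rw [e2, add_zero]
        apply sum_congr rfl
        intro i hi
        rw [← mul_sum, sum_range_succ (fun m => PB (A.erase i) p m * G (m+1)) N, hPB'N i hi]
        ring
      have hL : ∑ m ∈ range (N+1), PB A p m * (l * G (m+1))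
          = ∑ i ∈ A, p i * (∑ m ∈ range (N+1), PB A p m * G (m+1)) := by
        have e4 : ∀ m ∈ range (N+1), PB A p m * (l * G (m+1)) = l * (PB A p m * G (m+1)) :=
          fun m _ => by ring
        rw [sum_congr rfl e4, ← mul_sum, hl, sum_mul]
      have hexp : ∀ m ∈ range (N+1), PB A p m * (l * G (m+1) - (m:ℝ) * G m)
          = PB A p m * (l * G (m+1)) - PB A p m * ((m:ℝ) * G m) := fun m _ => by ring
      rw [sum_congr rfl hexp, sum_sub_distrib, hL, hT2, ← sum_sub_distrib]
      apply sum_congr rfl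
      intro i hi
      rw [hX i hi]
      have e3 : ∑ m ∈ range (N+1), PB (A.erase i) p m * (G (m+2) - G (m+1))
          = (∑ m ∈ range (N+1), PB (A.erase i) p m * G (m+2))
            - (∑ m ∈ range (N+1), PB (A.erase i) p m * G (m+1)) := by
        rw [← sum_sub_distrib]
        exact sum_congr rfl fun m _ => by ring
      rw [e3]
      ring
    rw [key]
    have hbd : ∀ i ∈ A, (p i)^2 * (∑ m ∈ range (N+1), PB (A.erase i) p m * (G (m+2) - G (m+1)))
        ≤ (p i)^2 * min 1 (1/l) := by
      intro i hi
      apply mul_le_mul_of_nonneg_left _ (sq_nonneg _)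
      calc ∑ m ∈ range (N+1), PB (A.erase i) p m * (G (m+2) - G (m+1))
          ≤ ∑ m ∈ range (N+1), PB (A.erase i) p m * min 1 (1/l) := by
            apply sum_le_sum
            intro m _
            have hnn : 0 ≤ PB (A.erase i) p m :=
              PB_nonneg (fun j hj => h01 j (mem_of_mem_erase hj)) m
            have := steinG_delta_bound hlpos S m
            have h2 : G (m+2) - G (m+1) ≤ min 1 (1/l) := le_trans (le_abs_self _) this
            exact mul_le_mul_of_nonneg_left h2 hnn
        _ = min 1 (1/l) := by
            rw [← sum_mul, PB_sum_one' (by rw [card_erase_of_mem hi]; omega), one_mul]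
    calc ∑ i ∈ A, (p i)^2 *
            (∑ m ∈ range (N+1), PB (A.erase i) p m * (G (m+2) - G (m+1)))
        ≤ ∑ i ∈ A, (p i)^2 * min 1 (1/l) := sum_le_sum hbd
      _ ≤ ∑ i ∈ A, p i * c * min 1 (1/l) := by
          apply sum_le_sum
          intro i hi
          apply mul_le_mul_of_nonneg_right _ (le_min (by norm_num) (by positivity))
          · rw [sq]
            exact mul_le_mul_of_nonneg_left (h i hi).2 (h i hi).1
      _ = c * (l * min 1 (1/l)) := by rw [← sum_mul, ← sum_mul, hl]; ring
      _ ≤ c * 1 := by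
          apply mul_le_mul_of_nonneg_left _ hc0
          rcases le_or_gt l 1 with h' | h'
          · calc l * min 1 (1/l) ≤ l * 1 := mul_le_mul_of_nonneg_left (min_le_left _ _) hl0
              _ ≤ 1 := by linarith
          · calc l * min 1 (1/l) ≤ l * (1/l) := mul_le_mul_of_nonneg_left (min_le_right _ _) hl0
              _ = 1 := by field_simp
      _ = c := mul_one c

lemma poi_conv {a h : ℝ} (m : ℕ) :
    poi (a + h) m = ∑ j ∈ range (m+1), poi h j * poi a (m - j) := by
  unfold poi
  rw [show a + h = h + a by ring, add_pow, mul_sum, sum_div]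
  apply sum_congr rfl
  intro j hj
  have hjm : j ≤ m := Nat.lt_succ_iff.mp (mem_range.mp hj)
  rw [Nat.cast_choose ℝ hjm]
  have h1 : (m.factorial : ℝ) ≠ 0 := by positivity
  have h2 : (j.factorial : ℝ) ≠ 0 := by positivity
  have h3 : ((m-j).factorial : ℝ) ≠ 0 := by positivity
  rw [neg_add, Real.exp_add]
  field_simp

lemma one_sub_exp_neg_le {h : ℝ} : 1 - Real.exp (-h) ≤ h := by
  have := Real.add_one_le_exp (-h)
  linarith

lemma exp_neg_le_one {h : ℝ} (hh : 0 ≤ h) : Real.exp (-h) ≤ 1 := by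
  rw [Real.exp_le_one_iff]
  linarith

lemma tv_poi_poi {a b : ℝ} (ha : 0 ≤ a) (hab : a ≤ b) : tvDist (poi a) (poi b) ≤ b - a := by
  set h := b - a with hh
  have hh0 : 0 ≤ h := by linarith
  have hb : b = a + h := by ring
  -- u : the h-part with 0 removed
  set u : ℕ → ℝ := fun j => if j = 0 then 0 else poi h j with hu
  have hu_nonneg : ∀ j, 0 ≤ u j := fun j => by
    rw [hu]; dsimp only; split_ifs
    · exact le_rfl
    · exact poi_nonneg hh0 j
  have h1 : Summable (fun j => if j = 0 then poi h j else 0) :=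
    summable_of_ne_finset_zero (s := {0}) (fun j hj => if_neg (by simpa using hj))
  have hu_sum : Summable u := by
    apply ((summable_poi h).sub h1).congr
    intro j
    by_cases hj : j = 0 <;> simp [hu, hj]
  have hpoih0 : poi h 0 = Real.exp (-h) := by simp [poi]
  set R : ℕ → ℝ := fun m => ∑ j ∈ range (m+1), u j * poi a (m - j) with hR
  have hR_nonneg : ∀ m, 0 ≤ R m := fun m =>
    sum_nonneg fun j _ => mul_nonneg (hu_nonneg j) (poi_nonneg ha _)
  have hdiff : ∀ m, poi b m - poi a m = poi a m * (Real.exp (-h) - 1) + R m := by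
    intro m
    rw [hb, poi_conv m]
    have e : ∀ j ∈ range (m+1), poi h j * poi a (m-j)
        = (if j = 0 then poi h 0 * poi a (m-j) else 0) + u j * poi a (m-j) := by
      intro j _
      by_cases hj : j = 0 <;> simp [hu, hj]
    rw [sum_congr rfl e, sum_add_distrib,
      sum_ite_eq' (range (m+1)) 0 (fun j => poi h 0 * poi a (m-j)),
      if_pos (mem_range.mpr (by omega))]
    rw [hpoih0, hR]
    simp only [Nat.sub_zero]
    ring
  have hu_abs : Summable (fun j => ‖u j‖) := by
    apply hu_sum.abs.congr
    intro j
    rw [Real.norm_eq_abs]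
  have hpa_abs : Summable (fun j => ‖poi a j‖) := by
    apply (summable_poi a).abs.congr
    intro j
    rw [Real.norm_eq_abs]
  have hR_sum : Summable R := by
    apply Summable.of_norm
    apply (summable_norm_sum_mul_range_of_summable_norm hu_abs hpa_abs).congr
    intro n
    rfl
  have hRtsum : ∑' m, R m = 1 - Real.exp (-h) := by
    have hprod := Summable.tsum_mul_tsum_eq_tsum_sum_range hu_sum (summable_poi a)
      (summable_mul_of_summable_norm hu_abs hpa_abs)
    have htu : ∑' j, u j = 1 - Real.exp (-h) := by
      have e2 : ∀ j : ℕ, u j = poi h j - (if j = 0 then poi h j else 0) := by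
        intro j
        by_cases hj : j = 0 <;> simp [hu, hj]
      rw [tsum_congr e2, Summable.tsum_sub (summable_poi h) h1, tsum_poi,
        tsum_eq_sum (s := {0}) (fun j hj => if_neg (by simpa using hj)),
        sum_singleton, if_pos rfl, hpoih0]
    rw [hR]
    rw [← hprod, htu, tsum_poi, mul_one]
  have hbound : ∀ m, |poi b m - poi a m| ≤ poi a m * (1 - Real.exp (-h)) + R m := by
    intro m
    rw [hdiff m]
    calc |poi a m * (Real.exp (-h) - 1) + R m|
        ≤ |poi a m * (Real.exp (-h) - 1)| + |R m| := abs_add_le _ _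
      _ = poi a m * (1 - Real.exp (-h)) + R m := by
          rw [abs_of_nonpos (mul_nonpos_of_nonneg_of_nonpos (poi_nonneg ha m)
            (by linarith [exp_neg_le_one hh0])), abs_of_nonneg (hR_nonneg m)]
          ring
  have hsumlhs : Summable (fun m => |poi a m - poi b m|) :=
    ((summable_poi a).sub (summable_poi b)).abs
  have hsumrhs : Summable (fun m => poi a m * (1 - Real.exp (-h)) + R m) :=
    ((summable_poi a).mul_right _).add hR_sum
  have hts : ∑' m, |poi a m - poi b m| ≤ ∑' m, (poi a m * (1 - Real.exp (-h)) + R m) := by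
    apply Summable.tsum_le_tsum _ hsumlhs hsumrhs
    intro m
    rw [abs_sub_comm]
    exact hbound m
  have hrhs : ∑' m, (poi a m * (1 - Real.exp (-h)) + R m) = 2 * (1 - Real.exp (-h)) := by
    rw [Summable.tsum_add ((summable_poi a).mul_right _) hR_sum, tsum_mul_right, tsum_poi, hRtsum]
    ring
  unfold tvDist
  rw [hrhs] at hts
  have := one_sub_exp_neg_le (h := h)
  linarith

lemma tvDist_triangle (P Q R : ℕ → ℝ) (h1 : Summable fun m => |P m - Q m|)
    (h2 : Summable fun m => |Q m - R m|) : tvDist P R ≤ tvDist P Q + tvDist Q R := by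
  unfold tvDist
  have hle : ∀ m, |P m - R m| ≤ |P m - Q m| + |Q m - R m| := fun m => abs_sub_le _ _ _
  have hsum : Summable (fun m => |P m - Q m| + |Q m - R m|) := h1.add h2
  have hlhs : Summable (fun m => |P m - R m|) :=
    Summable.of_nonneg_of_le (fun m => abs_nonneg _) hle hsum
  have := Summable.tsum_le_tsum hle hlhs hsum
  rw [Summable.tsum_add h1 h2] at this
  linarith

lemma tvDist_symm (P Q : ℕ → ℝ) : tvDist P Q = tvDist Q P := by
  unfold tvDist
  rw [tsum_congr (fun m => abs_sub_comm (P m) (Q m))]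


set_option maxHeartbeats 2000000 in
/-- Rounding in the interval of small expectations: probabilities in `[0, ⌊k^α⌋/k)` can be
rounded to multiples of `1/k` preserving the total sum up to `1/k`, so that the Poisson
binomial distribution changes by at most `3/k^{1−α}` in total variation distance. -/
theorem pb_rounding_small_expectations
    (α : ℝ) (hα : α ∈ Set.Ioo (0 : ℝ) 1)
    (k : ℕ) (hk : 1 ≤ k) (hkα : (3 : ℝ) ≤ (k : ℝ) ^ α)
    (n : ℕ) (p : Fin n → ℝ)
    (hp : ∀ i, p i ∈ Set.Ico (0 : ℝ) ((⌊(k : ℝ) ^ α⌋ : ℝ) / k)) :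
    ∃ q : Fin n → ℝ,
      (∀ i, ∃ m : ℕ, q i = (m : ℝ) / k) ∧
      (∀ i, q i ∈ Set.Icc (0 : ℝ) ((⌊(k : ℝ) ^ α⌋ : ℝ) / k)) ∧
      (∀ i, |q i - p i| ≤ 1 / k) ∧
      |(∑ i, q i) - ∑ i, p i| ≤ 1 / k ∧
      tvDist (PB Finset.univ p) (PB Finset.univ q) ≤ 3 / (k : ℝ) ^ (1 - α) := by
  obtain ⟨hα0, hα1⟩ := hα
  set K : ℝ := (k : ℝ) with hK
  have hK0 : (0:ℝ) < K := by
    rw [hK]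
    exact_mod_cast Nat.pos_of_ne_zero (by omega)
  have hK1 : (1:ℝ) ≤ K := by rw [hK]; exact_mod_cast hk
  set M : ℤ := ⌊K ^ α⌋ with hM
  have hM3 : (3:ℤ) ≤ M := Int.le_floor.mpr (by exact_mod_cast hkα)
  have hMle : (M:ℝ) ≤ K ^ α := Int.floor_le _
  have hM0 : (0:ℝ) ≤ (M:ℝ) := by exact_mod_cast (by omega : (0:ℤ) ≤ M)
  have hKαK : K ^ α ≤ K := by
    calc K ^ α ≤ K ^ (1:ℝ) := Real.rpow_le_rpow_of_exponent_le hK1 (le_of_lt hα1)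
      _ = K := Real.rpow_one K
  set c : ℝ := (M:ℝ) / K with hc
  have hc0 : 0 ≤ c := by rw [hc]; positivity
  have hc1 : c ≤ 1 := by rw [hc, div_le_one hK0]; linarith
  -- the rounding construction via partial sums
  set p' : ℕ → ℝ := fun j => if hj : j < n then p ⟨j, hj⟩ else 0 with hp'
  have hp'_nonneg : ∀ j, 0 ≤ p' j := fun j => by
    rw [hp']; dsimp only; split_ifs with hj
    · exact (hp ⟨j, hj⟩).1
    · exact le_rfl
  set Sf : ℕ → ℝ := fun t => ∑ j ∈ range t, p' j with hSf
  have hSstep : ∀ t, Sf (t+1) = Sf t + p' t := fun t => sum_range_succ _ t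
  set Qz : Fin n → ℤ := fun i => ⌊K * Sf ((i:ℕ)+1)⌋ - ⌊K * Sf (i:ℕ)⌋ with hQz
  have hQznn : ∀ i, 0 ≤ Qz i := by
    intro i
    rw [hQz]; dsimp only
    have h1 : Sf (i:ℕ) ≤ Sf ((i:ℕ)+1) := by rw [hSstep]; linarith [hp'_nonneg (i:ℕ)]
    have := Int.floor_le_floor (R := ℝ) (mul_le_mul_of_nonneg_left h1 hK0.le)
    omega
  set q : Fin n → ℝ := fun i => (((Qz i).toNat : ℕ) : ℝ) / k with hq
  have hqQ : ∀ i, q i = ((Qz i : ℝ)) / K := by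
    intro i
    have h9 : (((Qz i).toNat : ℕ) : ℝ) = ((Qz i : ℤ) : ℝ) := by
      exact_mod_cast Int.toNat_of_nonneg (hQznn i)
    rw [hq]
    dsimp only
    rw [h9, hK]
  have hpi : ∀ i : Fin n, p' (i:ℕ) = p i := by
    intro i
    rw [hp']; dsimp only
    rw [dif_pos i.isLt]
  have hpeq : ∀ i : Fin n, p i = Sf ((i:ℕ)+1) - Sf (i:ℕ) := by
    intro i
    rw [hSstep, hpi]; ring
  -- pointwise closeness
  have hclose : ∀ i : Fin n, |q i - p i| ≤ 1/K := by
    intro i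
    have h1 := Int.floor_le (K * Sf ((i:ℕ)+1))
    have h2 := Int.sub_one_lt_floor (K * Sf ((i:ℕ)+1))
    have h3 := Int.floor_le (K * Sf (i:ℕ))
    have h4 := Int.sub_one_lt_floor (K * Sf (i:ℕ))
    have hQzr : (Qz i : ℝ) = (⌊K * Sf ((i:ℕ)+1)⌋:ℝ) - (⌊K * Sf (i:ℕ)⌋:ℝ) := by
      rw [hQz]; push_cast; ring
    have e : q i - p i = ((Qz i : ℝ) - K * p i)/K := by
      rw [hqQ i]; field_simp
    rw [e, abs_div, abs_of_pos hK0, div_le_div_iff₀ hK0 hK0]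
    have hx : |(Qz i : ℝ) - K * p i| ≤ 1 := by
      rw [abs_le, hQzr, hpeq i]
      constructor
      · nlinarith
      · nlinarith
    nlinarith
  -- sums
  have hsump : ∑ i, p i = Sf n := by
    rw [hSf]
    dsimp only
    rw [← Fin.sum_univ_eq_sum_range (fun j => p' j) n]
    exact (sum_congr rfl fun i _ => (hpi i).symm)
  have hsumQz : ∑ i, Qz i = ⌊K * Sf n⌋ := by
    rw [hQz]
    dsimp only
    rw [Fin.sum_univ_eq_sum_range (fun j => ⌊K * Sf (j+1)⌋ - ⌊K * Sf j⌋) n,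
      sum_range_sub (fun j => ⌊K * Sf j⌋) n]
    have : Sf 0 = 0 := by rw [hSf]; simp
    rw [this, mul_zero, Int.floor_zero, sub_zero]
  have hsumq : ∑ i, q i = ((⌊K * Sf n⌋ : ℤ) : ℝ)/K := by
    rw [sum_congr rfl (fun i _ => hqQ i), ← sum_div, ← hsumQz]
    push_cast
    rfl
  have hsumdiff : |(∑ i, q i) - ∑ i, p i| ≤ 1/K := by
    rw [hsumq, hsump]
    have h1 := Int.floor_le (K * Sf n)
    have h2 := Int.sub_one_lt_floor (K * Sf n)
    have e : ((⌊K * Sf n⌋ : ℤ) : ℝ)/K - Sf n = (((⌊K * Sf n⌋ : ℤ) : ℝ) - K * Sf n)/K := by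
      field_simp
    rw [e, abs_div, abs_of_pos hK0, div_le_div_iff₀ hK0 hK0]
    have hx : |((⌊K * Sf n⌋ : ℤ) : ℝ) - K * Sf n| ≤ 1 := by
      rw [abs_le]
      constructor <;> nlinarith
    nlinarith
  -- range of q
  have hq0 : ∀ i, 0 ≤ q i := by
    intro i
    rw [hq]
    positivity
  have hqc : ∀ i, q i ≤ c := by
    intro i
    have hplt : K * p i < (M:ℝ) := by
      have h5 := (hp i).2
      rw [hc] at h5
      have := (lt_div_iff₀ hK0).mp h5
      nlinarith [this]
    have h6 := (abs_le.mp (hclose i)).2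
    have h7 : K * (1/K) = 1 := by field_simp
    have h8 : K * q i ≤ K * p i + 1 := by
      have := mul_le_mul_of_nonneg_left h6 hK0.le
      rw [mul_sub] at this
      linarith [this, h7]
    have hQK : (Qz i : ℝ) = K * q i := by rw [hqQ i]; field_simp
    have hQlt : (Qz i : ℝ) < (M:ℝ) + 1 := by linarith
    have hQM : Qz i ≤ M := by
      have : Qz i < M + 1 := by exact_mod_cast hQlt
      omega
    rw [hqQ i, hc]
    have hQMr : (Qz i : ℝ) ≤ (M : ℝ) := by exact_mod_cast hQM
    gcongr
  -- total variation estimate via Poisson approximation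
  have hplc : ∀ i ∈ (univ : Finset (Fin n)), 0 ≤ p i ∧ p i ≤ c :=
    fun i _ => ⟨(hp i).1, le_of_lt ((hp i).2)⟩
  have hqlc : ∀ i ∈ (univ : Finset (Fin n)), 0 ≤ q i ∧ q i ≤ c :=
    fun i _ => ⟨hq0 i, hqc i⟩
  have hlp0 : 0 ≤ ∑ i, p i := sum_nonneg fun i hi => (hplc i hi).1
  have hlq0 : 0 ≤ ∑ i, q i := sum_nonneg fun i hi => (hqlc i hi).1
  have htv1 : tvDist (PB univ p) (poi (∑ i, p i)) ≤ c := tv_PB_poi univ p c hc0 hc1 hplc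
  have htv2 : tvDist (PB univ q) (poi (∑ i, q i)) ≤ c := tv_PB_poi univ q c hc0 hc1 hqlc
  have htv3 : tvDist (poi (∑ i, p i)) (poi (∑ i, q i)) ≤ 1/K := by
    rcases le_total (∑ i, p i) (∑ i, q i) with hle | hle
    · have := tv_poi_poi hlp0 hle
      have h10 := (abs_le.mp hsumdiff).2
      linarith
    · rw [tvDist_symm]
      have := tv_poi_poi hlq0 hle
      have h10 := (abs_le.mp hsumdiff).1
      linarith
  have sA : Summable (fun m => |PB univ p m - poi (∑ i, p i) m|) :=
    (summable_PB.sub (summable_poi _)).abs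
  have sB : Summable (fun m => |poi (∑ i, p i) m - poi (∑ i, q i) m|) :=
    ((summable_poi _).sub (summable_poi _)).abs
  have sC : Summable (fun m => |poi (∑ i, q i) m - PB univ q m|) :=
    ((summable_poi _).sub summable_PB).abs
  have sBC : Summable (fun m => |poi (∑ i, p i) m - PB univ q m|) :=
    ((summable_poi _).sub summable_PB).abs
  have tri2 : tvDist (poi (∑ i, p i)) (PB univ q)
      ≤ tvDist (poi (∑ i, p i)) (poi (∑ i, q i)) + tvDist (poi (∑ i, q i)) (PB univ q) :=
    tvDist_triangle _ _ _ sB sC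
  have tri1 : tvDist (PB univ p) (PB univ q)
      ≤ tvDist (PB univ p) (poi (∑ i, p i)) + tvDist (poi (∑ i, p i)) (PB univ q) :=
    tvDist_triangle _ _ _ sA sBC
  have htvq2 : tvDist (poi (∑ i, q i)) (PB univ q) ≤ c := by
    rw [tvDist_symm]; exact htv2
  have htotal : tvDist (PB univ p) (PB univ q) ≤ c + 1/K + c := by linarith
  -- numerics
  have hKαpos : (0:ℝ) < K ^ α := lt_of_lt_of_le (by norm_num) hkα
  have hKm : K ^ (α - 1) = K ^ α / K := by
    rw [Real.rpow_sub hK0, Real.rpow_one]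
  have hrw : (3:ℝ)/K^(1-α) = 3 * K^(α-1) := by
    have hne : K^(1-α) ≠ 0 := ne_of_gt (Real.rpow_pos_of_pos hK0 _)
    have hmul : K^(1-α) * K^(α-1) = 1 := by
      rw [← Real.rpow_add hK0]
      norm_num
    rw [eq_comm, eq_div_iff hne, mul_assoc, mul_comm (K^(α-1)), hmul, mul_one]
  have hcle : c ≤ K^(α-1) := by
    rw [hc, hKm]
    gcongr
  have hinvK : 1/K ≤ K^(α-1)/3 := by
    rw [hKm, div_div, div_le_div_iff₀ hK0 (by positivity)]
    nlinarith
  have hKpos' : (0:ℝ) ≤ K^(α-1) := le_of_lt (Real.rpow_pos_of_pos hK0 _)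
  refine ⟨q, fun i => ⟨(Qz i).toNat, by rw [hq]⟩, fun i => ⟨hq0 i, hqc i⟩, fun i => hclose i,
    hsumdiff, ?_⟩
  rw [hrw]
  linarith
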